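/- arXiv:0810.5481 — 3 statements merged into one kernel-verified Lean document; each statement's English description precedes it below -/
import Mathlib

section
/- Let X₀ → X₁ → X₂ → ⋯ be a sequence of continuous maps f_n : X_n → X_{n+1} between Dold spaces. Then the mapping telescope T X = (⨿_{n≥0} X_n × [0,1])/∼, where (x,1) ∈ X_n × [0,1] is identified with (f_n(x),0) ∈ X_{n+1} × [0,1], is a Dold space. -/
open unitInterval

universe u v w

/-- A partition of unity: continuous `[0,1]`-valued maps whose pointwise sum is `1`. -/
def IsPartitionOfUnity {ι : Type*} {X : Type*} [TopologicalSpace X]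
    (f : ι → X → ℝ) : Prop :=
  (∀ i, Continuous (f i)) ∧ (∀ i x, f i x ∈ Set.Icc (0 : ℝ) 1) ∧
    ∀ x, HasSum (fun i => f i x) 1

/-- A cover is numerable if it admits a subordinate partition of unity with
locally finite supports. -/
def IsNumerableCover {ι : Type*} {X : Type*} [TopologicalSpace X]
    (U : ι → Set X) : Prop :=
  ∃ f : ι → X → ℝ, IsPartitionOfUnity f ∧
    LocallyFinite (fun i => closure (Function.support (f i))) ∧
    ∀ i, closure (Function.support (f i)) ⊆ U i

/-- `U` is ambiently contractible to `x₀`: the inclusion `U → X` is homotopic to the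
constant map at `x₀`. -/
def AmbientlyContractibleTo {X : Type*} [TopologicalSpace X] (U : Set X) (x₀ : X) : Prop :=
  ContinuousMap.Homotopic
    (⟨Subtype.val, continuous_subtype_val⟩ : C(U, X))
    (ContinuousMap.const ↥U x₀)

/-- `U ⊆ X` is ambiently contractible: the inclusion `U → X` is nullhomotopic. -/
def AmbientlyContractible {X : Type*} [TopologicalSpace X] (U : Set X) : Prop :=
  ∃ x₀ : X, AmbientlyContractibleTo U x₀

/-- A Dold space (numerably contractible space): a space admitting a numerable cover
by ambiently contractible subsets. -/
def IsDoldSpace (X : Type u) [TopologicalSpace X] : Prop :=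
  ∃ (ι : Type u) (U : ι → Set X),
    (∀ x, ∃ i, x ∈ U i) ∧ IsNumerableCover U ∧ ∀ i, AmbientlyContractible (U i)

/-- The generating relation of the mapping telescope of `f_n : X n → X (n+1)`:
`(x,1) ∈ X n × [0,1]` is identified with `(f n x, 0) ∈ X (n+1) × [0,1]`. -/
inductive TelescopeRel (X : ℕ → Type*) (f : ∀ n, X n → X (n + 1)) :
    (Σ n, X n × unitInterval) → (Σ n, X n × unitInterval) → Prop
  | glue (n : ℕ) (x : X n) :
      TelescopeRel X f ⟨n, (x, 1)⟩ ⟨n + 1, (f n x, 0)⟩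

/-- The mapping telescope of the sequence `X 0 → X 1 → X 2 → ⋯`. -/
def MappingTelescope (X : ℕ → Type*) (f : ∀ n, X n → X (n + 1)) :=
  Quot (TelescopeRel X f)

instance (X : ℕ → Type*) [∀ n, TopologicalSpace (X n)] (f : ∀ n, X n → X (n + 1)) :
    TopologicalSpace (MappingTelescope X f) :=
  instTopologicalSpaceQuot

open Set Function Topology

section
variable {Y : ℕ → Type u} [∀ m, TopologicalSpace (Y m)]

lemma continuous_sigma_subtype
    {S : Set (Σ m, Y m)} {Z : Type*} [TopologicalSpace Z] {g : ↥S → Z}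
    (hg : ∀ m, Continuous fun p : {y : Y m // (⟨m, y⟩ : Σ m, Y m) ∈ S} => g ⟨⟨m, p.1⟩, p.2⟩) :
    Continuous g := by
  let e : (Σ m, {y : Y m // (⟨m, y⟩ : Σ m, Y m) ∈ S}) ≃ ↥S :=
    { toFun := fun p => ⟨⟨p.1, p.2.1⟩, p.2.2⟩
      invFun := fun a => ⟨a.1.1, ⟨a.1.2, by cases a with | mk v hv => cases v; exact hv⟩⟩
      left_inv := fun p => rfl
      right_inv := fun a => by cases a with | mk v hv => cases v; rfl }
  have hcont : Continuous e := continuous_sigma fun m =>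
    Continuous.subtype_mk (continuous_sigmaMk.comp continuous_subtype_val) _
  have hopen : IsOpenMap e := by
    rw [isOpenMap_sigma]
    intro m O hO
    rw [isOpen_induced_iff] at hO
    obtain ⟨O₁, hO₁, rfl⟩ := hO
    have : (fun a => e ⟨m, a⟩) '' (Subtype.val ⁻¹' O₁) =
        Subtype.val ⁻¹' (Sigma.mk m '' O₁) := by
      ext a
      constructor
      · rintro ⟨y, hy, rfl⟩
        exact ⟨y.1, hy, rfl⟩
      · rintro ⟨y, hy, hey⟩
        have hmem : (⟨m, y⟩ : Σ m, Y m) ∈ S := by rw [hey]; exact a.2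
        exact ⟨⟨y, hmem⟩, hy, Subtype.ext hey⟩
    rw [this]
    exact (IsOpenEmbedding.sigmaMk (i := m)).isOpenMap _ hO₁ |>.preimage continuous_subtype_val

  have h2 : Continuous fun p : (Σ m, {y : Y m // (⟨m, y⟩ : Σ m, Y m) ∈ S}) => g (e p) :=
    continuous_sigma fun m => hg m
  have hcs : Continuous (e.symm : ↥S → _) := by
    rw [continuous_def]
    intro O hO
    rw [← Equiv.image_eq_preimage_symm]
    exact hopen O hO
  exact (h2.comp hcs).congr fun a => by
    show g (e (e.symm a)) = g a
    rw [Equiv.apply_symm_apply]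
end

namespace Stmt12

abbrev Tot (X : ℕ → Type u) := Σ n, X n × unitInterval

variable {X : ℕ → Type u} [∀ n, TopologicalSpace (X n)] (f : ∀ n, X n → X (n + 1))

def q : Tot X → MappingTelescope X f := Quot.mk _

lemma ione_ne_zero : (1 : unitInterval) ≠ 0 := by norm_num

def R' : Tot X → Tot X → Prop := fun a b =>
  a = b
  ∨ (∃ (n : ℕ) (x : X n) (y : X n), f n x = f n y ∧ a = ⟨n, (x, 1)⟩ ∧ b = ⟨n, (y, 1)⟩)
  ∨ (∃ (n : ℕ) (x : X n), a = ⟨n, (x, 1)⟩ ∧ b = ⟨n + 1, (f n x, 0)⟩)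
  ∨ (∃ (n : ℕ) (x : X n), b = ⟨n, (x, 1)⟩ ∧ a = ⟨n + 1, (f n x, 0)⟩)

omit [∀ n, TopologicalSpace (X n)] in
lemma level_eq {n m : ℕ} {p : X n × unitInterval} {r : X m × unitInterval}
    (h : (⟨n, p⟩ : Tot X) = ⟨m, r⟩) : n = m := congrArg Sigma.fst h

omit [∀ n, TopologicalSpace (X n)] in
lemma snd_eq {n : ℕ} {p r : X n × unitInterval}
    (h : (⟨n, p⟩ : Tot X) = ⟨n, r⟩) : p = r := eq_of_heq (Sigma.mk.inj_iff.mp h).2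

omit [∀ n, TopologicalSpace (X n)] in
lemma top_ne_bot {n m : ℕ} {x : X n} {y : X m} {s t : unitInterval} (hs : s = 1) (ht : t = 0)
    (h : (⟨n, (x, s)⟩ : Tot X) = ⟨m, (y, t)⟩) : False := by
  subst hs ht
  obtain rfl := level_eq h
  have h2 := snd_eq h
  rw [Prod.mk.injEq] at h2
  exact ione_ne_zero h2.2

omit [∀ n, TopologicalSpace (X n)] in
lemma top_eq_top {n m : ℕ} {x : X n} {y : X m} {s t : unitInterval}
    (h : (⟨n, (x, s)⟩ : Tot X) = ⟨m, (y, t)⟩) : ∃ e : n = m, e ▸ x = y := by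
  obtain rfl := level_eq h
  have h2 := snd_eq h
  rw [Prod.mk.injEq] at h2
  exact ⟨rfl, h2.1⟩

lemma r'_of_rel {a b : Tot X} (h : TelescopeRel X f a b) : R' f a b := by
  cases h with
  | glue n x => exact Or.inr (Or.inr (Or.inl ⟨n, x, rfl, rfl⟩))

lemma r'_refl (a : Tot X) : R' f a a := Or.inl rfl

lemma r'_symm {a b : Tot X} (h : R' f a b) : R' f b a := by
  rcases h with rfl | ⟨n,x,y,hxy,rfl,rfl⟩ | ⟨n,x,rfl,rfl⟩ | ⟨n,x,h1,h2⟩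
  · exact Or.inl rfl
  · exact Or.inr (Or.inl ⟨n,y,x,hxy.symm,rfl,rfl⟩)
  · exact Or.inr (Or.inr (Or.inr ⟨n,x,rfl,rfl⟩))
  · subst h1; subst h2; exact Or.inr (Or.inr (Or.inl ⟨n,x,rfl,rfl⟩))

lemma r'_trans {a b c : Tot X} (hab : R' f a b) (hbc : R' f b c) : R' f a c := by
  rcases hab with rfl | ⟨n,x,y,hxy,rfl,rfl⟩ | ⟨n,x,rfl,rfl⟩ | ⟨n,x,hb,rfl⟩
  · exact hbc
  · rcases hbc with rfl | ⟨m,x',y',hxy',h1,rfl⟩ | ⟨m,x',h1,rfl⟩ | ⟨m,x',rfl,h2⟩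
    · exact Or.inr (Or.inl ⟨n,x,y,hxy,rfl,rfl⟩)
    · obtain ⟨rfl, rfl⟩ := top_eq_top h1
      exact Or.inr (Or.inl ⟨n,x,y',hxy.trans hxy',rfl,rfl⟩)
    · obtain ⟨rfl, rfl⟩ := top_eq_top h1
      exact Or.inr (Or.inr (Or.inl ⟨n,x,rfl, by rw [hxy]⟩))
    · exact absurd h2 (fun h => (top_ne_bot rfl rfl h).elim)
  · rcases hbc with rfl | ⟨m,x',y',hxy',h1,rfl⟩ | ⟨m,x',h1,rfl⟩ | ⟨m,x',rfl,h2⟩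
    · exact Or.inr (Or.inr (Or.inl ⟨n,x,rfl,rfl⟩))
    · exact absurd h1.symm (fun h => (top_ne_bot rfl rfl h).elim)
    · exact absurd h1.symm (fun h => (top_ne_bot rfl rfl h).elim)
    · have e : n + 1 = m + 1 := level_eq h2
      obtain rfl : m = n := by omega
      have h3 := snd_eq h2
      rw [Prod.mk.injEq] at h3
      exact Or.inr (Or.inl ⟨m, x, x', h3.1, rfl, rfl⟩)
  · subst hb
    rcases hbc with rfl | ⟨m,x',y',hxy',h1,rfl⟩ | ⟨m,x',h1,rfl⟩ | ⟨m,x',rfl,h2⟩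
    · exact Or.inr (Or.inr (Or.inr ⟨n,x,rfl,rfl⟩))
    · obtain ⟨rfl, rfl⟩ := top_eq_top h1
      exact Or.inr (Or.inr (Or.inr ⟨n,y', rfl, by rw [← hxy']⟩))
    · obtain ⟨rfl, rfl⟩ := top_eq_top h1
      exact Or.inl rfl
    · exact absurd h2 (fun h => (top_ne_bot rfl rfl h).elim)

lemma q_eq_iff {a b : Tot X} : q f a = q f b ↔ R' f a b := by
  change Quot.mk (TelescopeRel X f) a = (Quot.mk (TelescopeRel X f) b : Quot (TelescopeRel X f)) ↔ R' f a b
  rw [Quot.eq]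
  constructor
  · intro h
    induction h with
    | rel a b h => exact r'_of_rel f h
    | refl a => exact r'_refl f a
    | symm a b h ih => exact r'_symm f ih
    | trans a b c h1 h2 ih1 ih2 => exact r'_trans f ih1 ih2
  · intro h
    rcases h with rfl | ⟨n,x,y,hxy,rfl,rfl⟩ | ⟨n,x,rfl,rfl⟩ | ⟨n,x,h1,h2⟩
    · exact .refl _
    · exact .trans _ _ _ (.rel _ _ (.glue n x))
        (by rw [hxy]; exact .symm _ _ (.rel _ _ (.glue n y)))
    · exact .rel _ _ (.glue n x)
    · subst h1; subst h2; exact .symm _ _ (.rel _ _ (.glue n x))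

end Stmt12


namespace Stmt12

variable {X : ℕ → Type u} [∀ n, TopologicalSpace (X n)] (f : ∀ n, X n → X (n + 1))

lemma isQM : IsQuotientMap (q f) := isQuotientMap_quot_mk

lemma preimage_image_eq {P : Set (Tot X)}
    (h2 : ∀ (n : ℕ) (x : X n),
      ((⟨n, (x, 1)⟩ : Tot X) ∈ P ↔ (⟨n + 1, (f n x, 0)⟩ : Tot X) ∈ P)) :
    q f ⁻¹' (q f '' P) = P := by
  apply Set.Subset.antisymm
  · rintro a ⟨b, hb, hq⟩
    have hr : R' f b a := (q_eq_iff f).mp hq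
    rcases hr with rfl | ⟨n,x,y,hxy,rfl,rfl⟩ | ⟨n,x,rfl,rfl⟩ | ⟨n,x,rfl,rfl⟩
    · exact hb
    · exact (h2 n y).mpr (by rw [← hxy]; exact (h2 n x).mp hb)
    · exact (h2 n x).mp hb
    · exact (h2 n x).mpr hb
  · intro a ha
    exact ⟨a, ha, rfl⟩

lemma continuous_of_lift {Z : Type*} [TopologicalSpace Z] {P : Set (Tot X)}
    (hP : IsOpen P)
    (hsat : q f ⁻¹' (q f '' P) = P) {g : ↥(q f '' P) → Z}
    (hg : Continuous fun p : ↥P => g ⟨q f p.1, mem_image_of_mem _ p.2⟩) :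
    Continuous g := by
  rw [continuous_def]
  intro O hO
  rw [isOpen_induced_iff]
  set G : ↥P → Z := fun p => g ⟨q f p.1, mem_image_of_mem _ p.2⟩ with hGdef
  have hGO : IsOpen (G ⁻¹' O) := hg.isOpen_preimage O hO
  rw [isOpen_induced_iff] at hGO
  obtain ⟨O₁, hO₁, hO₁eq⟩ := hGO
  have him : Subtype.val '' (G ⁻¹' O) = O₁ ∩ P := by
    rw [← hO₁eq, Subtype.image_preimage_coe, Set.inter_comm]
  have hopen0 : IsOpen (Subtype.val '' (G ⁻¹' O)) := him ▸ hO₁.inter hP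
  have hsub : Subtype.val '' (G ⁻¹' O) ⊆ P := fun a ⟨pa, _, hpa⟩ => hpa ▸ pa.2
  -- saturation of the set downstairs
  have hsat2 : q f ⁻¹' (q f '' (Subtype.val '' (G ⁻¹' O))) = Subtype.val '' (G ⁻¹' O) := by
    apply Set.Subset.antisymm
    · rintro c hc
      obtain ⟨a, ha, hqa⟩ := hc
      have hcP : c ∈ P := by
        rw [← hsat]
        exact ⟨a, hsub ha, hqa⟩
      obtain ⟨pa, hpaO, hpaa⟩ := ha
      refine ⟨⟨c, hcP⟩, ?_, rfl⟩
      show G ⟨c, hcP⟩ ∈ O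
      have : (⟨q f c, mem_image_of_mem _ hcP⟩ : ↥(q f '' P)) =
          ⟨q f pa.1, mem_image_of_mem _ pa.2⟩ := by
        apply Subtype.ext
        show q f c = q f pa.1
        rw [hpaa, hqa]
      show g ⟨q f c, mem_image_of_mem _ hcP⟩ ∈ O
      rw [this]
      exact hpaO
    · intro a ha
      exact ⟨a, ha, rfl⟩
  refine ⟨q f '' (Subtype.val '' (G ⁻¹' O)), ?_, ?_⟩
  · rw [← (isQM f).isOpen_preimage, hsat2]
    exact hopen0
  · -- val ⁻¹' (q '' (val '' (G⁻¹O))) = g ⁻¹' O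
    ext a
    constructor
    · rintro ⟨b, ⟨pb, hpbO, hpbb⟩, hqb⟩
      show g a ∈ O
      have : a = ⟨q f pb.1, mem_image_of_mem _ pb.2⟩ := by
        apply Subtype.ext
        show a.1 = q f pb.1
        rw [hpbb, hqb]
      rw [this]
      exact hpbO
    · intro hga
      obtain ⟨b, hbP, hqb⟩ := a.2
      have : a = ⟨q f b, mem_image_of_mem _ hbP⟩ := Subtype.ext hqb.symm
      refine ⟨b, ⟨⟨b, hbP⟩, ?_, rfl⟩, hqb⟩
      show g ⟨q f b, mem_image_of_mem _ hbP⟩ ∈ O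
      rw [← this]
      exact hga

lemma continuous_img {Z : Type*} [TopologicalSpace Z] {P : Set (Tot X)}
    (hP : IsOpen P)
    (hsat : q f ⁻¹' (q f '' P) = P) {g : ↥(q f '' P) → Z}
    (hg : ∀ m, Continuous fun p : {y : X m × unitInterval // (⟨m, y⟩ : Tot X) ∈ P} =>
      g ⟨q f ⟨m, p.1⟩, mem_image_of_mem _ p.2⟩) :
    Continuous g :=
  continuous_of_lift f hP hsat (continuous_sigma_subtype fun m => hg m)

end Stmt12

namespace Stmt12

/-! ### Weight functions -/

noncomputable def aF (t : unitInterval) : ℝ := min 1 (max 0 (2 - 3 * t))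
noncomputable def gF (t : unitInterval) : ℝ := min 1 (max 0 (3 * t - 1))

lemma aF_nonneg (t : unitInterval) : 0 ≤ aF t := le_min zero_le_one (le_max_left _ _)
lemma gF_nonneg (t : unitInterval) : 0 ≤ gF t := le_min zero_le_one (le_max_left _ _)
lemma aF_le_one (t : unitInterval) : aF t ≤ 1 := min_le_left _ _
lemma gF_le_one (t : unitInterval) : gF t ≤ 1 := min_le_left _ _

lemma aF_zero : aF 0 = 1 := by norm_num [aF]
lemma aF_one : aF 1 = 0 := by norm_num [aF]
lemma gF_zero : gF 0 = 0 := by norm_num [gF]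
lemma gF_one : gF 1 = 1 := by norm_num [gF]

lemma aF_add_gF (t : unitInterval) : aF t + gF t = 1 := by
  have h0 : (0:ℝ) ≤ t := t.2.1
  have h1 : (t:ℝ) ≤ 1 := t.2.2
  unfold aF gF
  rcases le_total (t:ℝ) (1/3) with h | h <;> rcases le_total (t:ℝ) (2/3) with h' | h' <;>
    rw [min_def, min_def] <;> rw [max_def, max_def] <;> split_ifs <;> linarith

lemma continuous_aF : Continuous aF := by
  apply Continuous.min continuous_const
  apply Continuous.max continuous_const
  exact (continuous_const.sub (continuous_const.mul continuous_subtype_val))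

lemma continuous_gF : Continuous gF := by
  apply Continuous.min continuous_const
  apply Continuous.max continuous_const
  exact ((continuous_const.mul continuous_subtype_val).sub continuous_const)

lemma aF_ne_zero {t : unitInterval} (h : aF t ≠ 0) : (t:ℝ) ≤ 2/3 := by
  by_contra hc
  push_neg at hc
  apply h
  unfold aF
  rw [max_eq_left (by linarith)]
  rw [min_eq_right (by linarith)]

lemma gF_ne_zero {t : unitInterval} (h : gF t ≠ 0) : 1/3 ≤ (t:ℝ) := by
  by_contra hc
  push_neg at hc
  apply h
  unfold gF
  rw [max_eq_left (by linarith)]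
  rw [min_eq_right (by linarith)]

variable {X : ℕ → Type u} [∀ n, TopologicalSpace (X n)] (f : ∀ n, X n → X (n + 1))

/-! ### The partition functions on the telescope -/

noncomputable def PhiPre (n : ℕ) (g : X n → ℝ) : Tot X → ℝ := fun a =>
  if h : a.1 = n then aF a.2.2 * g (h ▸ a.2.1)
  else if h : a.1 + 1 = n then gF a.2.2 * g (h ▸ f a.1 a.2.1)
  else 0

lemma phiPre_mk_self (n : ℕ) (g : X n → ℝ) (x : X n) (t : unitInterval) :
    PhiPre f n g ⟨n, (x, t)⟩ = aF t * g x := by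
  simp [PhiPre]

lemma phiPre_mk_succ (n : ℕ) (g : X (n+1) → ℝ) (x : X n) (t : unitInterval) :
    PhiPre f (n+1) g ⟨n, (x, t)⟩ = gF t * g (f n x) := by
  rw [PhiPre]
  rw [dif_neg (show ¬ n = n + 1 by omega), dif_pos rfl]

lemma phiPre_mk_other {m n : ℕ} (hm : m ≠ n) (hm2 : m + 1 ≠ n) (g : X n → ℝ)
    (p : X m × unitInterval) : PhiPre f n g ⟨m, p⟩ = 0 := by
  rw [PhiPre, dif_neg hm, dif_neg hm2]

lemma phiPre_glue (n : ℕ) (g : X n → ℝ) (m : ℕ) (x : X m) :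
    PhiPre f n g ⟨m, (x, 1)⟩ = PhiPre f n g ⟨m + 1, (f m x, 0)⟩ := by
  rcases eq_or_ne m n with rfl | h1
  · rw [phiPre_mk_self, phiPre_mk_other f (m := m + 1) (n := m) (by omega) (by omega), aF_one,
      zero_mul]
  · rcases eq_or_ne (m + 1) n with rfl | h2
    · rw [phiPre_mk_succ, phiPre_mk_self, gF_one, aF_zero]
    · rcases eq_or_ne (m + 2) n with rfl | h3
      · rw [phiPre_mk_other f h1 h2, phiPre_mk_succ, gF_zero, zero_mul]
      · rw [phiPre_mk_other f h1 h2, phiPre_mk_other f h2 (by omega)]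

noncomputable def PhiT (n : ℕ) (g : X n → ℝ) : MappingTelescope X f → ℝ :=
  Quot.lift (PhiPre f n g) (fun _ _ h => by cases h with | glue m x => exact phiPre_glue f n g m x)

lemma phiT_mk (n : ℕ) (g : X n → ℝ) (a : Tot X) : PhiT f n g (q f a) = PhiPre f n g a := rfl

lemma continuous_phiT (hf : ∀ n, Continuous (f n)) (n : ℕ) {g : X n → ℝ} (hg : Continuous g) :
    Continuous (PhiT f n g) := by
  rw [(isQM f).continuous_iff]
  apply continuous_sigma
  intro m
  rcases eq_or_ne m n with rfl | h1
  · exact (((continuous_aF.comp continuous_snd).mul (hg.comp continuous_fst))).congr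
      fun p => (phiPre_mk_self f m g p.1 p.2).symm
  · rcases eq_or_ne (m + 1) n with rfl | h2
    · exact (((continuous_gF.comp continuous_snd).mul
        (hg.comp ((hf m).comp continuous_fst)))).congr
        fun p => (phiPre_mk_succ f m g p.1 p.2).symm
    · exact continuous_const.congr fun p => (phiPre_mk_other f h1 h2 g p).symm

lemma phiT_mem_Icc (n : ℕ) {g : X n → ℝ} (hg : ∀ x, g x ∈ Set.Icc (0:ℝ) 1)
    (p : MappingTelescope X f) : PhiT f n g p ∈ Set.Icc (0:ℝ) 1 := by
  induction p using Quot.ind with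
  | _ a =>
    obtain ⟨m, x, t⟩ := a
    show PhiPre f n g ⟨m, (x, t)⟩ ∈ Set.Icc (0:ℝ) 1
    rcases eq_or_ne m n with rfl | h1
    · rw [phiPre_mk_self]
      exact ⟨mul_nonneg (aF_nonneg t) (hg x).1,
        mul_le_one₀ (aF_le_one t) (hg x).1 (hg x).2⟩
    · rcases eq_or_ne (m + 1) n with rfl | h2
      · rw [phiPre_mk_succ]
        exact ⟨mul_nonneg (gF_nonneg t) (hg _).1,
          mul_le_one₀ (gF_le_one t) (hg _).1 (hg _).2⟩
      · rw [phiPre_mk_other f h1 h2]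
        norm_num

end Stmt12

namespace Stmt12

variable {X : ℕ → Type u} [∀ n, TopologicalSpace (X n)] (f : ∀ n, X n → X (n + 1))

lemma hasSum_phiT {ι : ℕ → Type*} (φ : ∀ n, ι n → X n → ℝ)
    (hIcc : ∀ n i x, φ n i x ∈ Set.Icc (0:ℝ) 1)
    (hsum : ∀ n x, HasSum (fun i => φ n i x) 1)
    (p : MappingTelescope X f) :
    HasSum (fun j : Σ n, ι n => PhiT f j.1 (φ j.1 j.2) p) 1 := by
  induction p using Quot.ind with
  | _ a =>
    obtain ⟨m, x, t⟩ := a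
    show HasSum (fun j : Σ n, ι n => PhiPre f j.1 (φ j.1 j.2) ⟨m, (x, t)⟩) 1
    set F : (Σ n, ι n) → ℝ := fun j => PhiPre f j.1 (φ j.1 j.2) ⟨m, (x, t)⟩ with hF
    set gv : ℕ → ℝ := fun k => if k = m then aF t else if k = m + 1 then gF t else 0 with hgv
    have hfib : ∀ k, HasSum (fun i : ι k => F ⟨k, i⟩) (gv k) := by
      intro k
      rcases eq_or_ne k m with rfl | h1
      · have : HasSum (fun i : ι k => aF t * φ k i x) (aF t * 1) :=
          (hsum k x).mul_left (aF t)
        rw [mul_one] at this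
        simp only [hgv, if_pos rfl]
        exact this.congr_fun fun i => phiPre_mk_self f k (φ k i) x t
      · rcases eq_or_ne k (m + 1) with rfl | h2
        · have : HasSum (fun i : ι (m+1) => gF t * φ (m+1) i (f m x)) (gF t * 1) :=
            (hsum (m+1) (f m x)).mul_left (gF t)
          rw [mul_one] at this
          simp only [hgv, if_neg h1, if_pos rfl]
          exact this.congr_fun fun i => phiPre_mk_succ f m (φ (m+1) i) x t
        · simp only [hgv, if_neg h1, if_neg h2]
          exact hasSum_zero.congr_fun fun i =>
            phiPre_mk_other f (Ne.symm h1) (Ne.symm h2) (φ k i) (x, t)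
    have hgv1 : HasSum gv 1 := by
      have h0 : ∀ b ∉ ({m, m + 1} : Finset ℕ), gv b = 0 := by
        intro b hb
        simp only [Finset.mem_insert, Finset.mem_singleton] at hb
        push_neg at hb
        simp only [hgv, if_neg hb.1, if_neg hb.2]
      have : HasSum gv (∑ b ∈ ({m, m + 1} : Finset ℕ), gv b) := hasSum_sum_of_ne_finset_zero h0
      rwa [Finset.sum_pair (by omega), show gv m = aF t by simp [hgv],
        show gv (m + 1) = gF t by simp [hgv], aF_add_gF] at this
    have hFnn : ∀ j, 0 ≤ F j := by
      intro j
      exact (phiT_mem_Icc f j.1 (hIcc j.1 j.2) (q f ⟨m, (x, t)⟩)).1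
    have hsummable : Summable F := by
      rw [summable_sigma_of_nonneg hFnn]
      refine ⟨fun k => (hfib k).summable, ?_⟩
      have : (fun k => ∑' i : ι k, F ⟨k, i⟩) = gv := funext fun k => (hfib k).tsum_eq
      rw [this]
      exact hgv1.summable
    exact HasSum.sigma_of_hasSum hgv1 hfib hsummable

end Stmt12

namespace Stmt12

variable {X : ℕ → Type u} [∀ n, TopologicalSpace (X n)] (f : ∀ n, X n → X (n + 1))

/-- A generic "two-level" subset of the telescope's total space. -/
def LSet (n : ℕ) (U : Set (X n)) (c1 c2 : unitInterval → Prop) : Set (Tot X) :=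
  {a | (∃ h : a.1 = n, (h ▸ a.2.1) ∈ U ∧ c1 a.2.2) ∨
       (∃ h : a.1 + 1 = n, (h ▸ (f a.1 a.2.1)) ∈ U ∧ c2 a.2.2)}

variable {n m : ℕ} {U : Set (X n)} {c1 c2 : unitInterval → Prop}

omit [∀ n, TopologicalSpace (X n)] in
lemma lset_mem_self {x : X n} {t : unitInterval} :
    (⟨n, (x, t)⟩ : Tot X) ∈ LSet f n U c1 c2 ↔ x ∈ U ∧ c1 t := by
  constructor
  · rintro (⟨h, hU, ht⟩ | ⟨h, hU, ht⟩)
    · exact ⟨hU, ht⟩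
    · exact absurd (show n + 1 = n from h) (by omega)
  · rintro ⟨hU, ht⟩
    exact Or.inl ⟨rfl, hU, ht⟩

omit [∀ n, TopologicalSpace (X n)] in
lemma lset_mem_pred {U : Set (X (m+1))} {y : X m} {t : unitInterval} :
    (⟨m, (y, t)⟩ : Tot X) ∈ LSet f (m+1) U c1 c2 ↔ f m y ∈ U ∧ c2 t := by
  constructor
  · rintro (⟨h, hU, ht⟩ | ⟨h, hU, ht⟩)
    · exact absurd (show m = m + 1 from h) (by omega)
    · exact ⟨hU, ht⟩
  · rintro ⟨hU, ht⟩
    exact Or.inr ⟨rfl, hU, ht⟩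

omit [∀ n, TopologicalSpace (X n)] in
lemma lset_mem_other (h1 : m ≠ n) (h2 : m + 1 ≠ n) {p : X m × unitInterval} :
    (⟨m, p⟩ : Tot X) ∉ LSet f n U c1 c2 := by
  rintro (⟨h, -, -⟩ | ⟨h, -, -⟩)
  · exact h1 h
  · exact h2 h

omit [∀ n, TopologicalSpace (X n)] in
lemma lset_mono {U' : Set (X n)} {c1' c2' : unitInterval → Prop} (hU : U ⊆ U')
    (h1 : ∀ t, c1 t → c1' t) (h2 : ∀ t, c2 t → c2' t) :
    LSet f n U c1 c2 ⊆ LSet f n U' c1' c2' := by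
  rintro a (⟨h, hU', ht⟩ | ⟨h, hU', ht⟩)
  · exact Or.inl ⟨h, hU hU', h1 _ ht⟩
  · exact Or.inr ⟨h, hU hU', h2 _ ht⟩

lemma lset_saturated (hc10 : c1 0) (hc11 : ¬ c1 1) (hc20 : ¬ c2 0) (hc21 : c2 1) :
    q f ⁻¹' (q f '' LSet f n U c1 c2) = LSet f n U c1 c2 := by
  apply preimage_image_eq
  intro k x
  constructor
  · rintro (⟨h, hU, ht⟩ | ⟨h, hU, ht⟩)
    · exact absurd ht hc11
    · subst h
      exact (lset_mem_self f).mpr ⟨hU, hc10⟩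
  · intro hmem
    rcases eq_or_ne (k + 1) n with rfl | hne
    · rw [lset_mem_self f] at hmem
      exact (lset_mem_pred f).mpr ⟨hmem.1, hc21⟩
    · exfalso
      rcases eq_or_ne (k + 2) n with rfl | hne2
      · rw [show k + 1 + 1 = (k + 1) + 1 from rfl] at *
        exact absurd ((lset_mem_pred f).mp hmem).2 hc20
      · exact lset_mem_other f hne (by omega) hmem

lemma lset_isOpen (hf : ∀ k, Continuous (f k)) (hU : IsOpen U)
    (h1 : IsOpen {t : unitInterval | c1 t}) (h2 : IsOpen {t : unitInterval | c2 t}) :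
    IsOpen (LSet f n U c1 c2) := by
  rw [isOpen_sigma_iff]
  intro k
  rcases eq_or_ne k n with rfl | hk1
  · have : Sigma.mk k ⁻¹' (LSet f k U c1 c2) = {p : X k × unitInterval | p.1 ∈ U ∧ c1 p.2} :=
      Set.ext fun p => lset_mem_self f
    rw [this]
    exact (hU.preimage continuous_fst).inter (h1.preimage continuous_snd)
  · rcases eq_or_ne (k + 1) n with rfl | hk2
    · have : Sigma.mk k ⁻¹' (LSet f (k+1) U c1 c2) =
          {p : X k × unitInterval | f k p.1 ∈ U ∧ c2 p.2} :=
        Set.ext fun p => lset_mem_pred f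
      rw [this]
      exact (hU.preimage ((hf k).comp continuous_fst)).inter (h2.preimage continuous_snd)
    · have : Sigma.mk k ⁻¹' (LSet f n U c1 c2) = ∅ :=
        Set.eq_empty_of_forall_notMem fun p => lset_mem_other f hk1 hk2
      rw [this]
      exact isOpen_empty

lemma lset_isClosed (hf : ∀ k, Continuous (f k)) (hU : IsClosed U)
    (h1 : IsClosed {t : unitInterval | c1 t}) (h2 : IsClosed {t : unitInterval | c2 t}) :
    IsClosed (LSet f n U c1 c2) := by
  rw [isClosed_sigma_iff]
  intro k
  rcases eq_or_ne k n with rfl | hk1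
  · have : Sigma.mk k ⁻¹' (LSet f k U c1 c2) = {p : X k × unitInterval | p.1 ∈ U ∧ c1 p.2} :=
      Set.ext fun p => lset_mem_self f
    rw [this]
    exact (hU.preimage continuous_fst).inter (h1.preimage continuous_snd)
  · rcases eq_or_ne (k + 1) n with rfl | hk2
    · have : Sigma.mk k ⁻¹' (LSet f (k+1) U c1 c2) =
          {p : X k × unitInterval | f k p.1 ∈ U ∧ c2 p.2} :=
        Set.ext fun p => lset_mem_pred f
      rw [this]
      exact (hU.preimage ((hf k).comp continuous_fst)).inter (h2.preimage continuous_snd)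
    · have : Sigma.mk k ⁻¹' (LSet f n U c1 c2) = ∅ :=
        Set.eq_empty_of_forall_notMem fun p => lset_mem_other f hk1 hk2
      rw [this]
      exact isClosed_empty

/-! ### The concrete sets -/

def Vpre (n : ℕ) (U : Set (X n)) : Set (Tot X) :=
  LSet f n U (fun t => t < 1) (fun t => 0 < t)

def Opre (n : ℕ) : Set (Tot X) :=
  LSet f n Set.univ (fun t => t < 1) (fun t => 0 < t)

def Cpre (n : ℕ) (K : Set (X n)) : Set (Tot X) :=
  LSet f n K (fun t => (t:ℝ) ≤ 2/3) (fun t => (1/3:ℝ) ≤ t)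

def Npre (n : ℕ) (W : Set (X n)) : Set (Tot X) :=
  LSet f n W (fun t => t < 1) (fun t => (2/3:ℝ) < t)

lemma izero_lt_one : (0 : unitInterval) < 1 := by norm_num

lemma vpre_saturated (U : Set (X n)) :
    q f ⁻¹' (q f '' Vpre f n U) = Vpre f n U :=
  lset_saturated f izero_lt_one (lt_irrefl _) (lt_irrefl _) izero_lt_one

lemma opre_saturated : q f ⁻¹' (q f '' Opre f n) = Opre f n :=
  lset_saturated f izero_lt_one (lt_irrefl _) (lt_irrefl _) izero_lt_one

lemma cpre_saturated (K : Set (X n)) :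
    q f ⁻¹' (q f '' Cpre f n K) = Cpre f n K :=
  lset_saturated f (by norm_num) (by norm_num) (by norm_num) (by norm_num)

lemma npre_saturated (W : Set (X n)) :
    q f ⁻¹' (q f '' Npre f n W) = Npre f n W :=
  lset_saturated f izero_lt_one (lt_irrefl _) (by norm_num) (by norm_num)

lemma opre_isOpen (hf : ∀ k, Continuous (f k)) : IsOpen (Opre f n) :=
  lset_isOpen f hf isOpen_univ (isOpen_lt continuous_id continuous_const)
    (isOpen_lt continuous_const continuous_id)

lemma npre_isOpen (hf : ∀ k, Continuous (f k)) {W : Set (X n)} (hW : IsOpen W) :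
    IsOpen (Npre f n W) :=
  lset_isOpen f hf hW (isOpen_lt continuous_id continuous_const)
    (isOpen_lt continuous_const continuous_subtype_val)

lemma cpre_isClosed (hf : ∀ k, Continuous (f k)) {K : Set (X n)} (hK : IsClosed K) :
    IsClosed (Cpre f n K) :=
  lset_isClosed f hf hK (isClosed_le continuous_subtype_val continuous_const)
    (isClosed_le continuous_const continuous_subtype_val)

lemma cpre_subset_vpre {K U : Set (X n)} (hKU : K ⊆ U) :
    Cpre f n K ⊆ Vpre f n U :=
  lset_mono f hKU
    (fun t ht => by
      rw [← Subtype.coe_lt_coe]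
      have h1 : ((1 : unitInterval) : ℝ) = 1 := rfl
      rw [h1]
      linarith)
    (fun t ht => by
      rw [← Subtype.coe_lt_coe]
      have h0 : ((0 : unitInterval) : ℝ) = 0 := rfl
      rw [h0]
      linarith)

lemma vpre_subset_opre (U : Set (X n)) : Vpre f n U ⊆ Opre f n :=
  lset_mono f (Set.subset_univ U) (fun _ h => h) (fun _ h => h)

end Stmt12

namespace Stmt12

variable {X : ℕ → Type u} [∀ n, TopologicalSpace (X n)] (f : ∀ n, X n → X (n + 1))

def Vq (n : ℕ) (U : Set (X n)) : Set (MappingTelescope X f) := q f '' Vpre f n U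
def Oq (n : ℕ) : Set (MappingTelescope X f) := q f '' Opre f n
def Cq (n : ℕ) (K : Set (X n)) : Set (MappingTelescope X f) := q f '' Cpre f n K

lemma cq_isClosed (hf : ∀ k, Continuous (f k)) {n : ℕ} {K : Set (X n)} (hK : IsClosed K) :
    IsClosed (Cq f n K) := by
  rw [← (isQM f).isClosed_preimage]
  rw [show q f ⁻¹' (Cq f n K) = Cpre f n K from cpre_saturated f K]
  exact cpre_isClosed f hf hK

lemma support_phiT_subset (n : ℕ) (g : X n → ℝ) :
    Function.support (PhiT f n g) ⊆ Cq f n (closure (Function.support g)) := by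
  have : ∀ a : Tot X, PhiT f n g (q f a) ≠ 0 → q f a ∈ Cq f n (closure (Function.support g)) := by
    rintro ⟨m, x, t⟩ hne
    rw [phiT_mk] at hne
    rcases eq_or_ne m n with rfl | h1
    · rw [phiPre_mk_self] at hne
      have h2 := mul_ne_zero_iff.mp hne
      refine ⟨⟨m, (x, t)⟩, (lset_mem_self f).mpr ⟨subset_closure h2.2, aF_ne_zero h2.1⟩, rfl⟩
    · rcases eq_or_ne (m + 1) n with rfl | h2
      · rw [phiPre_mk_succ] at hne
        have h3 := mul_ne_zero_iff.mp hne
        refine ⟨⟨m, (x, t)⟩, (lset_mem_pred f).mpr ⟨subset_closure h3.2, gF_ne_zero h3.1⟩, rfl⟩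
      · rw [phiPre_mk_other f h1 h2] at hne
        exact absurd rfl hne
  intro p hp
  induction p using Quot.ind with
  | _ a => exact this a hp

lemma closure_support_phiT (hf : ∀ k, Continuous (f k)) (n : ℕ) (g : X n → ℝ) :
    closure (Function.support (PhiT f n g)) ⊆ Cq f n (closure (Function.support g)) :=
  closure_minimal (support_phiT_subset f n g) (cq_isClosed f hf isClosed_closure)

lemma cq_subset_vq {n : ℕ} {K U : Set (X n)} (hKU : K ⊆ U) : Cq f n K ⊆ Vq f n U :=
  Set.image_mono (cpre_subset_vpre f hKU)

lemma exists_rep_lt (p : MappingTelescope X f) :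
    ∃ (m : ℕ) (x : X m) (t : unitInterval), t < 1 ∧ q f ⟨m, (x, t)⟩ = p := by
  induction p using Quot.ind with
  | _ a =>
    obtain ⟨m, x, t⟩ := a
    rcases eq_or_lt_of_le (unitInterval.le_one' : t ≤ 1) with rfl | h
    · exact ⟨m + 1, f m x, 0, izero_lt_one, (Quot.sound (TelescopeRel.glue m x)).symm⟩
    · exact ⟨m, x, t, h, rfl⟩

lemma locallyFinite_cq {ι : ℕ → Type u} (hf : ∀ k, Continuous (f k)) (φ : ∀ n, ι n → X n → ℝ)
    (hlf : ∀ n, LocallyFinite fun i => closure (Function.support (φ n i))) :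
    LocallyFinite (fun j : Σ n, ι n => Cq f j.1 (closure (Function.support (φ j.1 j.2)))) := by
  intro p
  obtain ⟨m, x, t, ht, rfl⟩ := exists_rep_lt f p
  obtain ⟨W1, hW1nhds, hW1fin⟩ := hlf m x
  obtain ⟨W2, hW2nhds, hW2fin⟩ := hlf (m + 1) (f m x)
  obtain ⟨W1o, hW1sub, hW1open, hW1mem⟩ := mem_nhds_iff.mp hW1nhds
  obtain ⟨W2o, hW2sub, hW2open, hW2mem⟩ := mem_nhds_iff.mp hW2nhds
  set W : Set (X m) := W1o ∩ f m ⁻¹' W2o with hW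
  have hWopen : IsOpen W := hW1open.inter (hW2open.preimage (hf m))
  have hWx : x ∈ W := ⟨hW1mem, hW2mem⟩
  refine ⟨q f '' Npre f m W, ?_, ?_⟩
  · rw [mem_nhds_iff]
    refine ⟨q f '' Npre f m W, le_refl _, ?_, ?_⟩
    · rw [← (isQM f).isOpen_preimage, npre_saturated]
      exact npre_isOpen f hf hWopen
    · exact ⟨⟨m, (x, t)⟩, (lset_mem_self f).mpr ⟨hWx, ht⟩, rfl⟩
  · -- finiteness
    have key : ∀ j : Σ n, ι n,
        (Cq f j.1 (closure (Function.support (φ j.1 j.2))) ∩ q f '' Npre f m W).Nonempty →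
        (Cpre f j.1 (closure (Function.support (φ j.1 j.2))) ∩ Npre f m W).Nonempty := by
      rintro j ⟨p', hpC, hpN⟩
      obtain ⟨b, hbN, rfl⟩ := hpN
      have hbC : b ∈ Cpre f j.1 (closure (Function.support (φ j.1 j.2))) := by
        rw [← cpre_saturated f (closure (Function.support (φ j.1 j.2)))]
        exact hpC
      exact ⟨b, hbC, hbN⟩
    apply Set.Finite.subset (Set.Finite.union
      (Set.Finite.image (Sigma.mk m) hW1fin)
      (Set.Finite.image (Sigma.mk (m + 1)) hW2fin))
    intro j hj
    obtain ⟨b, hbC, hbN⟩ := key j hj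
    obtain ⟨k, y, s⟩ := b
    obtain ⟨nn, i⟩ := j
    rcases hbN with ⟨hk, hyW, hs⟩ | ⟨hk, hyW, hs⟩
    · -- level k = m
      obtain rfl : m = k := (show k = m from hk).symm
      rcases hbC with ⟨hk2, hyK, hs2⟩ | ⟨hk2, hyK, hs2⟩
      · obtain rfl : m = nn := hk2
        exact Or.inl ⟨i, ⟨y, hyK, hW1sub hyW.1⟩, rfl⟩
      · obtain rfl : m + 1 = nn := hk2
        exact Or.inr ⟨i, ⟨f m y, hyK, hW2sub hyW.2⟩, rfl⟩
    · -- level k + 1 = m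
      obtain rfl : k + 1 = m := hk
      rcases hbC with ⟨hk2, hyK, hs2⟩ | ⟨hk2, hyK, hs2⟩
      · -- s ≤ 2/3 and 2/3 < s : contradiction
        exfalso
        have h1 : (s:ℝ) ≤ 2/3 := hs2
        have h2 : (2/3:ℝ) < s := hs
        linarith
      · obtain rfl : k + 1 = nn := hk2
        exact Or.inl ⟨i, ⟨f k y, hyK, hW1sub hyW.1⟩, rfl⟩

end Stmt12

namespace Stmt12

variable {X : ℕ → Type u} [∀ n, TopologicalSpace (X n)] (f : ∀ n, X n → X (n + 1)) {n : ℕ}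

omit [∀ n, TopologicalSpace (X n)] in
lemma opre_level {a : Tot X} (ha : a ∈ Opre f n) (h : a.1 ≠ n) : a.1 + 1 = n := by
  rcases ha with ⟨h', -, -⟩ | ⟨h', -, -⟩
  · exact absurd h' h
  · exact h'

omit [∀ n, TopologicalSpace (X n)] in
lemma opre_top_level {k : ℕ} {x : X k} (ha : (⟨k, (x, 1)⟩ : Tot X) ∈ Opre f n) :
    k + 1 = n := by
  rcases ha with ⟨h', -, h1⟩ | ⟨h', -, -⟩
  · exact absurd h1 (lt_irrefl _)
  · exact h'

/-- The base-projection onto level `n`, on representatives. -/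
def Epre (a : Tot X) (ha : a ∈ Opre f n) : X n :=
  if h : a.1 = n then h ▸ a.2.1 else (opre_level f ha h) ▸ f a.1 a.2.1

lemma epre_self (p : X n × unitInterval) (ha : (⟨n, p⟩ : Tot X) ∈ Opre f n) :
    Epre f ⟨n, p⟩ ha = p.1 := by
  rw [Epre, dif_pos rfl]

lemma epre_pred {m : ℕ} (p : X m × unitInterval) (ha : (⟨m, p⟩ : Tot X) ∈ Opre f (m + 1)) :
    Epre f ⟨m, p⟩ ha = f m p.1 := by
  rw [Epre, dif_neg (show ¬ m = m + 1 by omega)]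

lemma epre_well {a b : Tot X} (ha : a ∈ Opre f n) (hb : b ∈ Opre f n)
    (hq : q f a = q f b) : Epre f a ha = Epre f b hb := by
  have hr := (q_eq_iff f).mp hq
  rcases hr with rfl | ⟨k,x,y,hxy,rfl,rfl⟩ | ⟨k,x,rfl,rfl⟩ | ⟨k,x,hb',ha'⟩
  · rfl
  · obtain rfl := opre_top_level f ha
    rw [epre_pred f (x, 1) ha, epre_pred f (y, 1) hb]
    exact hxy
  · obtain rfl := opre_top_level f ha
    rw [epre_pred f (x, 1) ha, epre_self f (f k x, 0) hb]
  · subst ha'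
    subst hb'
    obtain rfl := opre_top_level f hb
    rw [epre_pred f (x, 1) hb, epre_self f (f k x, 0) ha]

/-- The base-projection onto level `n`. -/
noncomputable def Emap (v : ↥(Oq f n)) : X n := Epre f v.2.choose v.2.choose_spec.1

lemma emap_mk (a : Tot X) (ha : a ∈ Opre f n) (hv : q f a ∈ Oq f n) :
    Emap f (⟨q f a, hv⟩ : ↥(Oq f n)) = Epre f a ha :=
  epre_well f _ ha hv.choose_spec.2

lemma continuous_emap (hf : ∀ k, Continuous (f k)) : Continuous (Emap f (n := n)) := by
  apply continuous_img f (opre_isOpen f hf) (opre_saturated f)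
  intro m
  rcases eq_or_ne m n with rfl | h1
  · refine (continuous_fst.comp continuous_subtype_val).congr fun p => ?_
    exact ((emap_mk f ⟨m, p.1⟩ p.2 _).trans (epre_self f _ _)).symm
  · have hlev : ∀ p : {y : X m × unitInterval // (⟨m, y⟩ : Tot X) ∈ Opre f n}, m + 1 = n :=
      fun p => opre_level f p.2 h1
    rcases eq_or_ne (m + 1) n with rfl | h2
    · refine (((hf m).comp continuous_fst).comp continuous_subtype_val).congr fun p => ?_
      exact ((emap_mk f ⟨m, p.1⟩ p.2 _).trans (epre_pred f _ _)).symm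
    · haveI : IsEmpty {y : X m × unitInterval // (⟨m, y⟩ : Tot X) ∈ Opre f n} :=
        ⟨fun p => h2 (hlev p)⟩
      exact continuous_iff_continuousAt.mpr fun p => (this.false p).elim

lemma continuous_imul : Continuous fun p : unitInterval × unitInterval => p.1 * p.2 := by
  continuity

/-- The slide paths, on representatives (a total function). -/
noncomputable def SLpre (n : ℕ) (a : Tot X) : C(unitInterval, MappingTelescope X f) :=
  if a.1 = n then
    ⟨fun s => q f ⟨a.1, (a.2.1, σ s * a.2.2)⟩,
      continuous_quot_mk.comp (continuous_sigmaMk.comp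
        (Continuous.prodMk continuous_const
          ((continuous_imul.comp (Continuous.prodMk
            (continuous_symm) continuous_const)))))⟩
  else
    ⟨fun s => q f ⟨a.1, (a.2.1, σ (σ s * σ a.2.2))⟩,
      continuous_quot_mk.comp (continuous_sigmaMk.comp
        (Continuous.prodMk continuous_const
          (continuous_symm.comp (continuous_imul.comp (Continuous.prodMk
            (continuous_symm) continuous_const)))))⟩

lemma slpre_apply_self (p : X n × unitInterval) (s : unitInterval) :
    SLpre f n ⟨n, p⟩ s = q f ⟨n, (p.1, σ s * p.2)⟩ := by
  rw [SLpre, if_pos rfl]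
  rfl

lemma slpre_apply_other {m : ℕ} (h : m ≠ n) (p : X m × unitInterval) (s : unitInterval) :
    SLpre f n ⟨m, p⟩ s = q f ⟨m, (p.1, σ (σ s * σ p.2))⟩ := by
  rw [SLpre, if_neg h]
  rfl

lemma slpre_apply_top {k : ℕ} (h : k ≠ n) (x : X k) (s : unitInterval) :
    SLpre f n ⟨k, (x, 1)⟩ s = q f ⟨k, (x, 1)⟩ := by
  rw [slpre_apply_other f h]
  have : σ (σ s * σ (1:unitInterval)) = 1 := by
    rw [symm_one, mul_zero, symm_zero]
  rw [this]

lemma slpre_well {a b : Tot X} (ha : a ∈ Opre f n) (hb : b ∈ Opre f n)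
    (hq : q f a = q f b) : SLpre f n a = SLpre f n b := by
  have hr := (q_eq_iff f).mp hq
  ext s
  rcases hr with rfl | ⟨k,x,y,hxy,rfl,rfl⟩ | ⟨k,x,rfl,rfl⟩ | ⟨k,x,hb',ha'⟩
  · rfl
  · have hk : k ≠ n := by have := opre_top_level f ha; omega
    rw [slpre_apply_top f hk, slpre_apply_top f hk]
    exact (q_eq_iff f).mpr (Or.inr (Or.inl ⟨k, x, y, hxy, rfl, rfl⟩))
  · have hk1 : k + 1 = n := opre_top_level f ha
    have hk : k ≠ n := by omega
    rw [slpre_apply_top f hk]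
    subst hk1
    rw [slpre_apply_self f (f k x, 0)]
    rw [show σ s * (0:unitInterval) = 0 from mul_zero _]
    exact Quot.sound (TelescopeRel.glue k x)
  · subst ha'
    subst hb'
    have hk1 : k + 1 = n := opre_top_level f hb
    have hk : k ≠ n := by omega
    rw [slpre_apply_top f hk]
    subst hk1
    rw [slpre_apply_self f (f k x, 0)]
    rw [show σ s * (0:unitInterval) = 0 from mul_zero _]
    exact (Quot.sound (TelescopeRel.glue k x)).symm

/-- The slide homotopy paths. -/
noncomputable def SLmap (v : ↥(Oq f n)) : C(unitInterval, MappingTelescope X f) :=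
  SLpre f n v.2.choose

lemma slmap_mk (a : Tot X) (ha : a ∈ Opre f n) (hv : q f a ∈ Oq f n) :
    SLmap f (⟨q f a, hv⟩ : ↥(Oq f n)) = SLpre f n a :=
  slpre_well f hv.choose_spec.1 ha hv.choose_spec.2

lemma continuous_slmap (hf : ∀ k, Continuous (f k)) : Continuous (SLmap f (n := n)) := by
  apply continuous_img f (opre_isOpen f hf) (opre_saturated f)
  intro m
  rcases eq_or_ne m n with rfl | h1
  · let big : C((X m × unitInterval) × unitInterval, MappingTelescope X f) :=
      ⟨fun r => q f ⟨m, (r.1.1, σ r.2 * r.1.2)⟩,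
        continuous_quot_mk.comp (continuous_sigmaMk.comp
          (Continuous.prodMk (continuous_fst.comp continuous_fst)
            (continuous_imul.comp (Continuous.prodMk
              (continuous_symm.comp continuous_snd)
              (continuous_snd.comp continuous_fst)))))⟩
    refine (big.curry.continuous.comp continuous_subtype_val).congr fun p => ?_
    refine Eq.trans ?_ (slmap_mk f ⟨m, p.1⟩ p.2 _).symm
    ext s
    rw [slpre_apply_self f p.1 s]
    simp only [Function.comp_apply, ContinuousMap.curry_apply]
    rfl
  · let big : C((X m × unitInterval) × unitInterval, MappingTelescope X f) :=
      ⟨fun r => q f ⟨m, (r.1.1, σ (σ r.2 * σ r.1.2))⟩,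
        continuous_quot_mk.comp (continuous_sigmaMk.comp
          (Continuous.prodMk (continuous_fst.comp continuous_fst)
            (continuous_symm.comp (continuous_imul.comp (Continuous.prodMk
              (continuous_symm.comp continuous_snd)
              (continuous_symm.comp (continuous_snd.comp continuous_fst)))))))⟩
    refine (big.curry.continuous.comp continuous_subtype_val).congr fun p => ?_
    refine Eq.trans ?_ (slmap_mk f ⟨m, p.1⟩ p.2 _).symm
    ext s
    rw [slpre_apply_other f h1 p.1 s]
    simp only [Function.comp_apply, ContinuousMap.curry_apply]
    rfl

lemma slmap_zero (v : ↥(Oq f n)) : SLmap f v 0 = v.1 := by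
  obtain ⟨a, ha, hqa⟩ := v.2
  have hv : v = ⟨q f a, hqa ▸ v.2⟩ := Subtype.ext hqa.symm
  rw [hv, slmap_mk f a ha]
  obtain ⟨m, x, t⟩ := a
  rcases eq_or_ne m n with rfl | h1
  · rw [slpre_apply_self f (x, t)]
    rw [show σ (0:unitInterval) * t = t by rw [symm_zero, one_mul]]
  · rw [slpre_apply_other f h1 (x, t)]
    rw [show σ (σ (0:unitInterval) * σ t) = t by rw [symm_zero, one_mul, symm_symm]]

lemma slmap_one (v : ↥(Oq f n)) : SLmap f v 1 = q f ⟨n, (Emap f v, 0)⟩ := by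
  obtain ⟨a, ha, hqa⟩ := v.2
  have hv : v = ⟨q f a, hqa ▸ v.2⟩ := Subtype.ext hqa.symm
  rw [hv, slmap_mk f a ha, emap_mk f a ha]
  obtain ⟨m, x, t⟩ := a
  rcases eq_or_ne m n with rfl | h1
  · rw [slpre_apply_self f (x, t), epre_self f (x, t)]
    rw [show σ (1:unitInterval) * t = 0 by rw [symm_one, zero_mul]]
  · have hk1 : m + 1 = n := opre_level f ha h1
    subst hk1
    rw [slpre_apply_other f h1 (x, t), epre_pred f (x, t)]
    rw [show σ (σ (1:unitInterval) * σ t) = 1 by rw [symm_one, zero_mul, symm_zero]]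
    exact Quot.sound (TelescopeRel.glue m x)

end Stmt12

namespace Stmt12

def homotopyOfCurried {Y Z : Type*} [TopologicalSpace Y] [TopologicalSpace Z]
    (F0 F1 : C(Y, Z)) (g : Y → C(unitInterval, Z)) (hg : Continuous g)
    (h0 : ∀ y, g y 0 = F0 y) (h1 : ∀ y, g y 1 = F1 y) :
    ContinuousMap.Homotopy F0 F1 where
  toFun := fun p => g p.2 p.1
  continuous_toFun := by
    have h := (ContinuousMap.uncurry (⟨g, hg⟩ : C(Y, C(unitInterval, Z)))).continuous
    exact h.comp continuous_swap
  map_zero_left := h0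
  map_one_left := h1

variable {X : ℕ → Type u} [∀ n, TopologicalSpace (X n)] (f : ∀ n, X n → X (n + 1)) {n : ℕ}

lemma vq_contractible (hf : ∀ k, Continuous (f k)) (U : Set (X n)) (x₀ : X n)
    (hU : AmbientlyContractibleTo U x₀) :
    AmbientlyContractibleTo (Vq f n U) (q f ⟨n, (x₀, 0)⟩) := by
  classical
  obtain ⟨H⟩ := hU
  have hsub : Vq f n U ⊆ Oq f n := Set.image_mono (vpre_subset_opre f U)
  let inc : ↥(Vq f n U) → ↥(Oq f n) := Set.inclusion hsub
  have hinc : Continuous inc := continuous_inclusion hsub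
  have emem : ∀ v : ↥(Vq f n U), Emap f (inc v) ∈ U := by
    intro v
    obtain ⟨a, ha, hqa⟩ := v.2
    have hao : a ∈ Opre f n := vpre_subset_opre f U ha
    have hv : inc v = ⟨q f a, mem_image_of_mem _ hao⟩ := Subtype.ext hqa.symm
    have hE : Emap f (inc v) = Epre f a hao := (congrArg (Emap f) hv).trans (emap_mk f a hao _)
    rw [hE]
    obtain ⟨m, x, t⟩ := a
    rcases eq_or_ne m n with rfl | h1
    · rw [epre_self f (x, t)]
      exact ((lset_mem_self f).mp ha).1
    · have hk1 : m + 1 = n := opre_level f hao h1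
      subst hk1
      rw [epre_pred f (x, t)]
      exact ((lset_mem_pred f).mp ha).1
  let e : ↥(Vq f n U) → ↥U := fun v => ⟨Emap f (inc v), emem v⟩
  have he : Continuous e := ((continuous_emap f hf).comp hinc).subtype_mk _
  let g1 : ↥(Vq f n U) → C(unitInterval, MappingTelescope X f) := fun v => SLmap f (inc v)
  have hg1 : Continuous g1 := (continuous_slmap f hf).comp hinc
  let cmid : C(↥(Vq f n U), MappingTelescope X f) :=
    ⟨fun v => q f ⟨n, (Emap f (inc v), 0)⟩, by
      refine continuous_quot_mk.comp (continuous_sigmaMk.comp ?_)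
      exact ((continuous_emap f hf).comp hinc).prodMk continuous_const⟩
  have hom1 : ContinuousMap.Homotopy
      (⟨Subtype.val, continuous_subtype_val⟩ : C(↥(Vq f n U), MappingTelescope X f)) cmid :=
    homotopyOfCurried _ _ g1 hg1 (fun v => slmap_zero f (inc v)) (fun v => slmap_one f (inc v))
  let HC : C(↥U, C(unitInterval, X n)) :=
    (H.toContinuousMap.comp ⟨Prod.swap, continuous_swap⟩).curry
  let postq : C(X n, MappingTelescope X f) :=
    ⟨fun x => q f ⟨n, (x, 0)⟩,
      continuous_quot_mk.comp (continuous_sigmaMk.comp (continuous_id.prodMk continuous_const))⟩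
  let g2 : ↥(Vq f n U) → C(unitInterval, MappingTelescope X f) := fun v => postq.comp (HC (e v))
  have hg2 : Continuous g2 := (ContinuousMap.continuous_postcomp postq).comp (HC.continuous.comp he)
  have h20 : ∀ v, g2 v 0 = cmid v := by
    intro v
    show postq (HC (e v) 0) = q f ⟨n, (Emap f (inc v), 0)⟩
    have hstep : HC (e v) 0 = H (0, e v) := rfl
    rw [hstep, H.apply_zero]
    rfl
  have h21 : ∀ v, g2 v 1 =
      (ContinuousMap.const (↥(Vq f n U)) (q f ⟨n, (x₀, 0)⟩)) v := by
    intro v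
    show postq (HC (e v) 1) = _
    have hstep : HC (e v) 1 = H (1, e v) := rfl
    rw [hstep, H.apply_one]
    rfl
  have hom2 : ContinuousMap.Homotopy cmid
      (ContinuousMap.const (↥(Vq f n U)) (q f ⟨n, (x₀, 0)⟩)) :=
    homotopyOfCurried _ _ g2 hg2 h20 h21
  exact ContinuousMap.Homotopic.trans ⟨hom1⟩ ⟨hom2⟩

end Stmt12


open Stmt12 in
/-- the mapping telescope of a sequence of maps of Dold spaces is Dold. -/
theorem stmt12 (X : ℕ → Type u) [∀ n, TopologicalSpace (X n)]
    (f : ∀ n, X n → X (n + 1)) (hf : ∀ n, Continuous (f n))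
    (hX : ∀ n, IsDoldSpace (X n)) :
    IsDoldSpace (MappingTelescope X f) := by

  classical
  choose ι U hcov hnum hcontr using hX
  choose φ hpart hlf hsubord using hnum
  choose x₀ hx₀ using hcontr
  have hIcc : ∀ n i x, φ n i x ∈ Set.Icc (0:ℝ) 1 := fun n i x => (hpart n).2.1 i x
  have hsum : ∀ n x, HasSum (fun i => φ n i x) 1 := fun n x => (hpart n).2.2 x
  refine ⟨(Σ k, ι k), fun j => Vq f j.1 (U j.1 j.2), ?_, ?_, ?_⟩
  · -- covering
    intro p
    have hs := hasSum_phiT f φ hIcc hsum p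
    have hex : ∃ j : Σ k, ι k, PhiT f j.1 (φ j.1 j.2) p ≠ 0 := by
      by_contra hc
      push_neg at hc
      have h0 : HasSum (fun j : Σ k, ι k => PhiT f j.1 (φ j.1 j.2) p) 0 :=
        hasSum_zero.congr_fun fun j => hc j
      exact one_ne_zero (hs.unique h0)
    obtain ⟨j, hj⟩ := hex
    exact ⟨j, cq_subset_vq f (hsubord j.1 j.2) (support_phiT_subset f j.1 (φ j.1 j.2) hj)⟩
  · -- numerability
    refine ⟨fun j => PhiT f j.1 (φ j.1 j.2), ⟨?_, ?_, ?_⟩, ?_, ?_⟩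
    · exact fun j => continuous_phiT f hf j.1 ((hpart j.1).1 j.2)
    · exact fun j p => phiT_mem_Icc f j.1 (fun x => hIcc j.1 j.2 x) p
    · exact fun p => hasSum_phiT f φ hIcc hsum p
    · exact (locallyFinite_cq f hf φ hlf).subset
        fun j => closure_support_phiT f hf j.1 (φ j.1 j.2)
    · exact fun j => (closure_support_phiT f hf j.1 (φ j.1 j.2)).trans
        (cq_subset_vq f (hsubord j.1 j.2))
  · -- contractibility
    intro j
    exact ⟨_, vq_contractible f hf (U j.1 j.2) (x₀ j.1 j.2) (hx₀ j.1 j.2)⟩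
end

section
/- Let p : E → B be a fibration (a map with the homotopy lifting property) over a path-connected space B. If B is a Dold space and the fiber F = p⁻¹(b₀) over some point b₀ ∈ B is a Dold space, then the total space E is a Dold space. -/
open unitInterval

universe u v w

/-- A map has the homotopy lifting property with respect to all spaces (is a Hurewicz
fibration). -/
def IsFibration {E B : Type*} [TopologicalSpace E] [TopologicalSpace B] (p : C(E, B)) : Prop :=
  ∀ (Z : Type*) [TopologicalSpace Z] (H : C(Z × unitInterval, B)) (h₀ : C(Z, E)),
    (∀ z, p (h₀ z) = H (z, 0)) →
      ∃ H' : C(Z × unitInterval, E),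
        (∀ z, H' (z, 0) = h₀ z) ∧ ∀ w, p (H' w) = H w

lemma key {E B : Type u} [TopologicalSpace E] [TopologicalSpace B]
    (p : C(E, B)) (hp : IsFibration.{u, u, u} p)
    [PathConnectedSpace B] (b₀ : B) {U : Set B} (hU : AmbientlyContractible U) :
    ∃ q : C(↥(p ⁻¹' U), ↥(p ⁻¹' {b₀} : Set E)),
      ContinuousMap.Homotopic
        (⟨Subtype.val, continuous_subtype_val⟩ : C(↥(p ⁻¹' U), E))
        ((⟨Subtype.val, continuous_subtype_val⟩ : C(↥(p ⁻¹' {b₀} : Set E), E)).comp q) := by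
  obtain ⟨b₁, ⟨G⟩⟩ := hU
  set Z := ↥(p ⁻¹' U) with hZ
  have hmc : Continuous (fun w : Z × unitInterval => ((w.2, ⟨p w.1.1, w.1.2⟩) : unitInterval × ↥U)) := by
    exact continuous_snd.prodMk ((p.continuous.comp (continuous_subtype_val.comp continuous_fst)).subtype_mk _)
  let H1 : C(Z × unitInterval, B) := ⟨fun w => G (w.2, ⟨p w.1.1, w.1.2⟩), G.continuous.comp hmc⟩
  obtain ⟨D, hD0, hDp⟩ := hp Z H1 ⟨Subtype.val, continuous_subtype_val⟩ (fun z => by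
    show p z.1 = G (0, ⟨p z.1, z.2⟩)
    rw [G.apply_zero]; rfl)
  let γ : Path b₁ b₀ := (PathConnectedSpace.joined b₁ b₀).somePath
  let H2 : C(Z × unitInterval, B) := ⟨fun w => γ w.2, γ.continuous.comp continuous_snd⟩
  let h2 : C(Z, E) := ⟨fun z => D (z, 1), D.continuous.comp (by fun_prop)⟩
  obtain ⟨K, hK0, hKp⟩ := hp Z H2 h2 (fun z => by
    show p (D (z, 1)) = γ 0
    rw [hDp (z, 1)]
    show G (1, ⟨p z.1, z.2⟩) = γ 0
    rw [G.apply_one, γ.source]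
    rfl)
  have hq : ∀ z : Z, K (z, 1) ∈ (p ⁻¹' {b₀} : Set E) := fun z => by
    show p (K (z, 1)) ∈ ({b₀} : Set B)
    rw [hKp (z, 1)]
    show γ 1 ∈ ({b₀} : Set B)
    rw [γ.target]; rfl
  refine ⟨⟨fun z => ⟨K (z, 1), hq z⟩, by fun_prop⟩, ?_⟩
  have ht1 : ContinuousMap.Homotopy (⟨Subtype.val, continuous_subtype_val⟩ : C(Z, E)) h2 :=
    { toContinuousMap := D.comp ⟨fun w => (w.2, w.1), by fun_prop⟩
      map_zero_left := fun z => hD0 z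
      map_one_left := fun z => rfl }
  have ht2 : ContinuousMap.Homotopy h2
      ((⟨Subtype.val, continuous_subtype_val⟩ : C(↥(p ⁻¹' {b₀} : Set E), E)).comp
        (⟨fun z => ⟨K (z, 1), hq z⟩, by fun_prop⟩ : C(Z, ↥(p ⁻¹' {b₀} : Set E)))) :=
    { toContinuousMap := K.comp ⟨fun w => (w.2, w.1), by fun_prop⟩
      map_zero_left := fun z => hK0 z
      map_one_left := fun z => rfl }
  exact ⟨ht1.trans ht2⟩

/-- if `p : E → B` is a fibration over a path-connected Dold space with a
Dold fiber, then `E` is a Dold space. -/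
theorem stmt14 {E B : Type u} [TopologicalSpace E] [TopologicalSpace B]
    (p : C(E, B)) (hp : IsFibration.{u, u, u} p)
    [PathConnectedSpace B] (hB : IsDoldSpace B)
    (b₀ : B) (hF : IsDoldSpace (p ⁻¹' {b₀} : Set E)) :
    IsDoldSpace E := by
  classical
  rcases isEmpty_or_nonempty E with hE | hE
  · refine ⟨{x : E // False}, fun i => i.2.elim, fun x => hE.elim x,
      ⟨fun i => i.2.elim, ⟨fun i => i.2.elim, fun i => i.2.elim, fun x => hE.elim x⟩,
        fun x => hE.elim x, fun i => i.2.elim⟩, fun i => i.2.elim⟩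
  obtain ⟨ιB, U, hUcov, ⟨f, ⟨hfc, hf01, hfsum⟩, hflf, hfsupp⟩, hUc⟩ := hB
  obtain ⟨ιF, W, hWcov, ⟨φ, ⟨hφc, hφ01, hφsum⟩, hφlf, hφsupp⟩, hWc⟩ := hF
  choose q hq using fun i => key p hp b₀ (hUc i)
  set T : ιB → Set E := fun i => p ⁻¹' (U i) with hT
  set S : ιB → Set E := fun i => closure (Function.support fun y => f i (p y)) with hS
  set h : ιB × ιF → E → ℝ := fun ij x =>
    if hx : x ∈ T ij.1 then f ij.1 (p x) * φ ij.2 (q ij.1 ⟨x, hx⟩) else 0 with hh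
  set A : ιB × ιF → Set E := fun ij => Subtype.val '' (q ij.1 ⁻¹' (W ij.2)) with hA
  -- basic facts
  have hSsub : ∀ i, S i ⊆ p ⁻¹' closure (Function.support (f i)) := by
    intro i
    apply closure_minimal _ (isClosed_closure.preimage p.continuous)
    rw [show (fun y => f i (p y)) = (f i) ∘ p from rfl, Function.support_comp_eq_preimage]
    exact Set.preimage_mono subset_closure
  have hST : ∀ i, S i ⊆ T i := fun i => (hSsub i).trans (Set.preimage_mono (hfsupp i))
  have hfzero : ∀ i x, x ∉ T i → f i (p x) = 0 := by
    intro i x hx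
    by_contra hne
    exact hx (hfsupp i (subset_closure hne))
  have hsupp1 : ∀ ij, Function.support (h ij) ⊆ Function.support fun y => f ij.1 (p y) := by
    intro ij y hy
    simp only [hh, Function.mem_support] at hy ⊢
    intro h0
    apply hy
    split
    · rw [h0, zero_mul]
    · rfl
  have hclos : ∀ ij, closure (Function.support (h ij)) ⊆ S ij.1 :=
    fun ij => closure_mono (hsupp1 ij)
  have hkey : ∀ i j y, y ∈ closure (Function.support (h (i, j))) →
      ∃ hyT : y ∈ T i, q i ⟨y, hyT⟩ ∈ closure (Function.support (φ j)) := by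
    intro i j y hy
    have hyT : y ∈ T i := hST i (hclos (i, j) hy)
    refine ⟨hyT, ?_⟩
    have hsub : Function.support (h (i, j)) ⊆ T i := (hsupp1 (i, j)).trans (by
      intro y hy
      exact hST i (subset_closure hy))
    have h1 : (⟨y, hyT⟩ : ↥(T i)) ∈ closure (Subtype.val ⁻¹' Function.support (h (i, j))) := by
      rw [closure_subtype, Subtype.image_preimage_coe, Set.inter_eq_self_of_subset_right hsub]
      exact hy
    have h2 : (Subtype.val ⁻¹' Function.support (h (i, j)) : Set ↥(T i)) ⊆
        (q i) ⁻¹' (Function.support (φ j)) := by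
      intro z hz
      simp only [Set.mem_preimage, Function.mem_support, hh] at hz ⊢
      rw [dif_pos z.2] at hz
      intro h0
      apply hz
      have : (⟨z.1, z.2⟩ : ↥(T i)) = z := rfl
      rw [this, h0, mul_zero]
    have h3 := (closure_mono h2).trans ((q i).continuous.closure_preimage_subset _)
    exact h3 h1
  -- continuity
  have hcont : ∀ ij, Continuous (h ij) := by
    intro ij
    rw [continuous_iff_continuousAt]
    intro x
    by_cases hfx : f ij.1 (p x) = 0
    · have hb : ∀ y, 0 ≤ h ij y ∧ h ij y ≤ f ij.1 (p y) := by
        intro y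
        simp only [hh]
        split
        · constructor
          · exact mul_nonneg (hf01 _ _).1 (hφ01 _ _).1
          · exact mul_le_of_le_one_right (hf01 _ _).1 (hφ01 _ _).2
        · exact ⟨le_refl 0, (hf01 _ _).1⟩
      have hx0 : h ij x = 0 := le_antisymm ((hb x).2.trans_eq hfx) (hb x).1
      unfold ContinuousAt
      rw [hx0]
      exact squeeze_zero (fun y => (hb y).1) (fun y => (hb y).2)
        (by
          have : Filter.Tendsto (fun y => f ij.1 (p y)) (nhds x) (nhds (f ij.1 (p x))) :=
            ((hfc ij.1).comp p.continuous).continuousAt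
          rwa [hfx] at this)
    · have hO : IsOpen {y : E | f ij.1 (p y) ≠ 0} :=
        isOpen_compl_singleton.preimage ((hfc ij.1).comp p.continuous)
      have hOsub : {y : E | f ij.1 (p y) ≠ 0} ⊆ T ij.1 := by
        intro y hy
        exact hfsupp ij.1 (subset_closure hy)
      have hcOn : ContinuousOn (h ij) (T ij.1) := by
        rw [continuousOn_iff_continuous_domRestrict]
        have : (T ij.1).domRestrict (h ij) =
            fun z : ↥(T ij.1) => f ij.1 (p z.1) * φ ij.2 (q ij.1 z) := by
          funext z
          simp only [Set.domRestrict_apply, hh, dif_pos z.2]; rfl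
        rw [this]
        exact ((hfc ij.1).comp (p.continuous.comp continuous_subtype_val)).mul
          ((hφc ij.2).comp (q ij.1).continuous)
      exact (hcOn.mono hOsub).continuousAt (hO.mem_nhds hfx)
  -- locally finite S
  have hSlf : LocallyFinite S := by
    intro x
    obtain ⟨N, hN, hNfin⟩ := hflf (p x)
    refine ⟨p ⁻¹' N, p.continuous.continuousAt.preimage_mem_nhds hN, ?_⟩
    apply hNfin.subset
    rintro i ⟨y, hy1, hy2⟩
    exact ⟨p y, hSsub i hy1, hy2⟩
  -- main local finiteness
  have hlf : LocallyFinite fun ij => closure (Function.support (h ij)) := by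
    intro x
    obtain ⟨N, hN, hNfin⟩ := hSlf x
    have choice : ∀ i : ιB, ∃ V : Set E, IsOpen V ∧ x ∈ V ∧
        {j : ιF | (closure (Function.support (h (i, j))) ∩ V).Nonempty}.Finite := by
      intro i
      by_cases hx : x ∈ T i
      · obtain ⟨M, hM, hMfin⟩ := hφlf (q i ⟨x, hx⟩)
        have hpre : IsOpen ((q i) ⁻¹' interior M) := isOpen_interior.preimage (q i).continuous
        obtain ⟨V, hVopen, hVpre⟩ := isOpen_induced_iff.mp hpre
        refine ⟨V, hVopen, ?_, ?_⟩
        · have : (⟨x, hx⟩ : ↥(T i)) ∈ (q i) ⁻¹' interior M := by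
            exact mem_interior_iff_mem_nhds.mpr hM
          rw [← hVpre] at this
          exact this
        · apply hMfin.subset
          rintro j ⟨y, hy1, hy2⟩
          obtain ⟨hyT, hyφ⟩ := hkey i j y hy1
          have : (⟨y, hyT⟩ : ↥(T i)) ∈ (q i) ⁻¹' interior M := by
            rw [← hVpre]; exact hy2
          exact ⟨q i ⟨y, hyT⟩, hyφ, interior_subset this⟩
      · refine ⟨(S i)ᶜ, isClosed_closure.isOpen_compl, fun hc => hx (hST i hc), ?_⟩
        apply Set.finite_empty.subset
        rintro j ⟨y, hy1, hy2⟩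
        exact hy2 (hclos (i, j) hy1)
    choose V hVopen hVx hVfin using choice
    set sN := {i : ιB | (S i ∩ N).Nonempty} with hsN
    refine ⟨N ∩ ⋂ i ∈ sN, V i, Filter.inter_mem hN
      ((Filter.biInter_mem hNfin).mpr fun i _ => (hVopen i).mem_nhds (hVx i)), ?_⟩
    apply (hNfin.biUnion (fun i _ => ((hVfin i).image fun j => (i, j)))).subset
    rintro ⟨i, j⟩ ⟨y, hy1, hy2⟩
    have hiN : i ∈ sN := ⟨y, hclos (i, j) hy1, hy2.1⟩
    have hyV : y ∈ V i := by
      have := hy2.2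
      rw [Set.mem_iInter₂] at this
      exact this i hiN
    exact Set.mem_biUnion hiN ⟨j, ⟨y, hy1, hyV⟩, rfl⟩
  -- assemble
  refine ⟨ιB × ιF, A, ?_, ⟨h, ⟨hcont, ?_, ?_⟩, hlf, ?_⟩, ?_⟩
  · -- coverage
    intro x
    obtain ⟨i, hi⟩ := hUcov (p x)
    obtain ⟨j, hj⟩ := hWcov (q i ⟨x, hi⟩)
    exact ⟨(i, j), ⟨⟨x, hi⟩, hj, rfl⟩⟩
  · -- bounds
    intro ij x
    simp only [hh]
    split
    · exact ⟨mul_nonneg (hf01 _ _).1 (hφ01 _ _).1,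
        mul_le_one₀ (hf01 _ _).2 (hφ01 _ _).1 (hφ01 _ _).2⟩
    · exact ⟨le_refl 0, zero_le_one⟩
  · -- sum
    intro x
    have hinner : ∀ i, HasSum (fun j => h (i, j) x) (f i (p x)) := by
      intro i
      by_cases hx : x ∈ T i
      · have := (hφsum (q i ⟨x, hx⟩)).mul_left (f i (p x))
        rw [mul_one] at this
        suffices e : (fun j => h (i, j) x) = fun j => f i (p x) * φ j (q i ⟨x, hx⟩) by rw [e]; exact this
        funext j
        simp only [hh, dif_pos hx]
      · have h0 : (fun j => h (i, j) x) = fun _ => (0 : ℝ) := by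
          funext j
          simp only [hh, dif_neg hx]
        rw [h0, hfzero i x hx]
        exact hasSum_zero
    have hnn : ∀ ij : ιB × ιF, 0 ≤ h ij x := by
      intro ij
      simp only [hh]
      split
      · exact mul_nonneg (hf01 _ _).1 (hφ01 _ _).1
      · exact le_refl 0
    have hsummable : Summable fun ij : ιB × ιF => h ij x := by
      rw [summable_prod_of_nonneg hnn]
      refine ⟨fun i => (hinner i).summable, ?_⟩
      have : (fun i => ∑' j, h (i, j) x) = fun i => f i (p x) := by
        funext i
        exact (hinner i).tsum_eq
      rw [this]
      exact (hfsum (p x)).summable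
    obtain ⟨s, hs⟩ := hsummable
    have := hs.prod_fiberwise hinner
    rwa [HasSum.unique this (hfsum (p x))] at hs
  · -- subordination
    rintro ⟨i, j⟩ y hy
    obtain ⟨hyT, hyφ⟩ := hkey i j y hy
    exact ⟨⟨y, hyT⟩, hφsupp j hyφ, rfl⟩
  · -- contractibility
    rintro ⟨i, j⟩
    obtain ⟨e, ⟨Gw⟩⟩ := hWc j
    refine ⟨(e : E), ?_⟩
    have hAT : A (i, j) ⊆ T i := by
      rintro y ⟨z, _, rfl⟩
      exact z.2
    set r : C(↥(A (i, j)), ↥(T i)) :=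
      ⟨fun a => ⟨a.1, hAT a.2⟩, continuous_subtype_val.subtype_mk _⟩ with hr
    have hrW : ∀ a : ↥(A (i, j)), q i (r a) ∈ W j := by
      rintro ⟨y, z, hz, hzy⟩
      have : r ⟨y, ⟨z, hz, hzy⟩⟩ = z := Subtype.ext hzy.symm
      rw [this]
      exact hz
    set r2 : C(↥(A (i, j)), ↥(W j)) :=
      ⟨fun a => ⟨q i (r a), hrW a⟩, ((q i).continuous.comp r.continuous).subtype_mk _⟩ with hr2
    have step1 : ContinuousMap.Homotopic
        ((⟨Subtype.val, continuous_subtype_val⟩ : C(↥(T i), E)).comp r)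
        (((⟨Subtype.val, continuous_subtype_val⟩ : C(↥(p ⁻¹' {b₀} : Set E), E)).comp (q i)).comp r) :=
      (hq i).comp (ContinuousMap.Homotopic.refl r)
    have step2 : ContinuousMap.Homotopic
        (((⟨Subtype.val, continuous_subtype_val⟩ : C(↥(p ⁻¹' {b₀} : Set E), E)).comp (q i)).comp r)
        (ContinuousMap.const ↥(A (i, j)) (e : E)) := by
      have heq : ((⟨Subtype.val, continuous_subtype_val⟩ : C(↥(p ⁻¹' {b₀} : Set E), E)).comp (q i)).comp r =
          ((⟨Subtype.val, continuous_subtype_val⟩ : C(↥(p ⁻¹' {b₀} : Set E), E)).comp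
            (⟨Subtype.val, continuous_subtype_val⟩ : C(↥(W j), ↥(p ⁻¹' {b₀} : Set E)))).comp r2 := by
        ext a
        rfl
      rw [heq]
      have h1 : ContinuousMap.Homotopic
          ((⟨Subtype.val, continuous_subtype_val⟩ : C(↥(W j), ↥(p ⁻¹' {b₀} : Set E))).comp r2)
          ((ContinuousMap.const ↥(W j) e).comp r2) :=
        ContinuousMap.Homotopic.comp ⟨Gw⟩ (ContinuousMap.Homotopic.refl r2)
      have h2 := (ContinuousMap.Homotopic.refl
        (⟨Subtype.val, continuous_subtype_val⟩ : C(↥(p ⁻¹' {b₀} : Set E), E))).comp h1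
      have heq2 : (⟨Subtype.val, continuous_subtype_val⟩ : C(↥(p ⁻¹' {b₀} : Set E), E)).comp
          ((ContinuousMap.const ↥(W j) e).comp r2) = ContinuousMap.const ↥(A (i, j)) (e : E) := by
        ext a
        rfl
      rw [← heq2]
      have heqc : ((⟨Subtype.val, continuous_subtype_val⟩ : C(↥(p ⁻¹' {b₀} : Set E), E)).comp
            (⟨Subtype.val, continuous_subtype_val⟩ : C(↥(W j), ↥(p ⁻¹' {b₀} : Set E)))).comp r2
          = (⟨Subtype.val, continuous_subtype_val⟩ : C(↥(p ⁻¹' {b₀} : Set E), E)).comp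
            ((⟨Subtype.val, continuous_subtype_val⟩ : C(↥(W j), ↥(p ⁻¹' {b₀} : Set E))).comp r2) := by ext a; rfl
      rw [heqc]
      exact h2
    have heq3 : (⟨Subtype.val, continuous_subtype_val⟩ : C(↥(A (i, j)), E)) =
        (⟨Subtype.val, continuous_subtype_val⟩ : C(↥(T i), E)).comp r := by
      ext a
      rfl
    rw [AmbientlyContractibleTo, heq3]
    exact step1.trans step2
end

section
/- If X and Y are Dold spaces, then the product space X × Y is a Dold space. -/
open unitInterval

universe u v w

set_option maxHeartbeats 2000000 in
/-- a product of two Dold spaces is a Dold space. -/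
theorem stmt15 {X : Type u} {Y : Type v} [TopologicalSpace X] [TopologicalSpace Y]
    (hX : IsDoldSpace X) (hY : IsDoldSpace Y) :
    IsDoldSpace (X × Y) := by
  obtain ⟨ι, U, hUcov, ⟨f, ⟨hfc, hf01, hfs⟩, hflf, hfsub⟩, hUc⟩ := hX
  obtain ⟨κ, V, hVcov, ⟨g, ⟨hgc, hg01, hgs⟩, hglf, hgsub⟩, hVc⟩ := hY
  refine ⟨ι × κ, fun p => U p.1 ×ˢ V p.2, ?_, ?_, ?_⟩
  · rintro ⟨x, y⟩
    obtain ⟨i, hi⟩ := hUcov x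
    obtain ⟨j, hj⟩ := hVcov y
    exact ⟨(i, j), hi, hj⟩
  · refine ⟨fun p q => f p.1 q.1 * g p.2 q.2, ⟨?_, ?_, ?_⟩, ?_, ?_⟩
    · exact fun p => ((hfc p.1).comp continuous_fst).mul ((hgc p.2).comp continuous_snd)
    · rintro ⟨i, j⟩ ⟨x, y⟩
      constructor
      · exact mul_nonneg (hf01 i x).1 (hg01 j y).1
      · calc f i x * g j y ≤ 1 * 1 :=
              mul_le_mul (hf01 i x).2 (hg01 j y).2 (hg01 j y).1 zero_le_one
          _ = 1 := one_mul 1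
    · rintro ⟨x, y⟩
      have := (hfs x).mul (hgs y) ?_
      · simpa using this
      · exact Summable.mul_of_nonneg (hfs x).summable (hgs y).summable
          (fun i => (hf01 i x).1) (fun j => (hg01 j y).1)
    · rintro ⟨x, y⟩
      obtain ⟨Nx, hNx, hNxf⟩ := hflf x
      obtain ⟨Ny, hNy, hNyf⟩ := hglf y
      refine ⟨Nx ×ˢ Ny, prod_mem_nhds hNx hNy, ?_⟩
      refine Set.Finite.subset (hNxf.prod hNyf) ?_
      rintro ⟨i, j⟩ ⟨⟨a, b⟩, hab1, hab2, hab3⟩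
      have hsub : closure (Function.support fun q : X × Y => f i q.1 * g j q.2) ⊆
          closure (Function.support (f i)) ×ˢ closure (Function.support (g j)) := by
        rw [← closure_prod_eq]
        refine closure_mono ?_
        rintro ⟨a, b⟩ h
        exact ⟨left_ne_zero_of_mul h, right_ne_zero_of_mul h⟩
      obtain ⟨h1, h2⟩ := hsub hab1
      exact ⟨⟨a, h1, hab2⟩, ⟨b, h2, hab3⟩⟩
    · rintro ⟨i, j⟩
      have hsub : closure (Function.support fun q : X × Y => f i q.1 * g j q.2) ⊆
          closure (Function.support (f i)) ×ˢ closure (Function.support (g j)) := by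
        rw [← closure_prod_eq]
        refine closure_mono ?_
        rintro ⟨a, b⟩ h
        exact ⟨left_ne_zero_of_mul h, right_ne_zero_of_mul h⟩
      exact hsub.trans (Set.prod_mono (hfsub i) (hgsub j))
  · rintro ⟨i, j⟩
    obtain ⟨x₀, Hx⟩ := hUc i
    obtain ⟨y₀, Hy⟩ := hVc j
    refine ⟨(x₀, y₀), ?_⟩
    let π₁ : C(↥(U i ×ˢ V j), ↥(U i)) :=
      ⟨fun p => ⟨p.1.1, p.2.1⟩, Continuous.subtype_mk (continuous_fst.comp continuous_subtype_val) _⟩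
    let π₂ : C(↥(U i ×ˢ V j), ↥(V j)) :=
      ⟨fun p => ⟨p.1.2, p.2.2⟩, Continuous.subtype_mk (continuous_snd.comp continuous_subtype_val) _⟩
    have h1 := Hx.comp (ContinuousMap.Homotopic.refl π₁)
    have h2 := Hy.comp (ContinuousMap.Homotopic.refl π₂)
    have key := h1.map2 ContinuousMap.Homotopy.prodMk h2
    have e1 : ((⟨Subtype.val, continuous_subtype_val⟩ : C(↥(U i), X)).comp π₁).prodMk
        ((⟨Subtype.val, continuous_subtype_val⟩ : C(↥(V j), Y)).comp π₂) =
        (⟨Subtype.val, continuous_subtype_val⟩ : C(↥(U i ×ˢ V j), X × Y)) := by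
      ext p <;> rfl
    have e2 : ((ContinuousMap.const ↥(U i) x₀).comp π₁).prodMk
        ((ContinuousMap.const ↥(V j) y₀).comp π₂) =
        ContinuousMap.const ↥(U i ×ˢ V j) (x₀, y₀) := by
      ext p <;> rfl
    rw [e1, e2] at key
    exact key
end
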